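/- If the service time distribution G with mean α is NWUE, i.e., ∫_t^∞ (1 − G(v)) dv ≥ α e^{−t/α} for all t ≥ 0, then the peakedness satisfies p ≥ (e^ρ − ρ − 1)/(ρ(e^ρ − 1)). -/

import Mathlib

open Real MeasureTheory Set

set_option maxHeartbeats 1000000 in
/-- If the service time distribution `G` with mean `α` is NWUE, i.e.
`∫_t^∞ (1 - G(v)) dv ≥ α e^{-t/α}` for all `t ≥ 0`, then the peakedness
satisfies `p ≥ (e^ρ - ρ - 1)/(ρ(e^ρ - 1))`. -/
theorem stmt_5 (lam α ρ : ℝ) (G : ℝ → ℝ)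
    (hlam : 0 < lam) (hα : 0 < α) (hρ : ρ = lam * α)
    (hGmono : Monotone G) (hG0 : ∀ t, 0 ≤ G t) (hG1 : ∀ t, G t ≤ 1)
    (hGint : IntegrableOn (fun v => 1 - G v) (Ioi 0))
    (hGmean : (∫ v in Ioi (0:ℝ), (1 - G v)) = α)
    (hNWUE : ∀ t ≥ (0:ℝ), α * Real.exp (-(t / α)) ≤ ∫ v in Ioi t, (1 - G v)) :
    (Real.exp ρ - ρ - 1) / (ρ * (Real.exp ρ - 1)) ≤
    1 + 1 / ρ -
        1 / (lam * ∫ t in Ioi (0:ℝ),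
          Real.exp (-(t / α) - lam * ∫ v in (0:ℝ)..t, (1 - G v))) := by
  have hρpos : 0 < ρ := by rw [hρ]; positivity
  have hαne : (α : ℝ) ≠ 0 := ne_of_gt hα
  have hρne : ρ ≠ 0 := ne_of_gt hρpos
  -- the primitive P t = ∫_0^t (1-G)
  set P : ℝ → ℝ := fun t => ∫ v in (0:ℝ)..t, (1 - G v) with hP
  have hanti : Antitone (fun v => 1 - G v) := fun a b hab => by
    simp only [sub_le_sub_iff_left]; exact hGmono hab
  have hintab : ∀ a b : ℝ, IntervalIntegrable (fun v => 1 - G v) volume a b :=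
    fun a b => hanti.intervalIntegrable
  have hPcont : Continuous P := intervalIntegral.continuous_primitive hintab 0
  -- Step A: P t ≤ α (1 - exp(-(t/α))) for t ≥ 0
  have hA : ∀ t ≥ (0:ℝ), P t ≤ α * (1 - Real.exp (-(t / α))) := by
    intro t ht
    have hsub : Ioi t ⊆ Ioi (0:ℝ) := Ioi_subset_Ioi ht
    have hdiff := MeasureTheory.integral_diff measurableSet_Ioi hGint hsub
    rw [Ioi_diff_Ioi] at hdiff
    have hPt : P t = ∫ v in Ioc (0:ℝ) t, (1 - G v) :=
      intervalIntegral.integral_of_le ht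
    rw [hPt, hdiff, hGmean]
    have := hNWUE t ht
    nlinarith [this]
  -- nonnegativity of P on [0,∞)
  have hPnn : ∀ t ≥ (0:ℝ), 0 ≤ P t := by
    intro t ht
    apply intervalIntegral.integral_nonneg ht
    intro v _
    have := hG1 v; linarith
  -- lower bound integrand g and upper integrand h
  set g : ℝ → ℝ := fun t => Real.exp (-(t / α) - ρ + ρ * Real.exp (-(t / α))) with hg
  set h : ℝ → ℝ := fun t => Real.exp (-(t / α) - lam * P t) with hh
  -- pointwise comparison on Ioi 0
  have hgh : ∀ t ∈ Ioi (0:ℝ), g t ≤ h t := by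
    intro t ht
    have ht' : (0:ℝ) ≤ t := le_of_lt ht
    apply Real.exp_le_exp.2
    have h1 : lam * P t ≤ lam * (α * (1 - Real.exp (-(t / α)))) :=
      mul_le_mul_of_nonneg_left (hA t ht') hlam.le
    have : lam * (α * (1 - Real.exp (-(t / α)))) = ρ - ρ * Real.exp (-(t / α)) := by
      rw [hρ]; ring
    linarith [h1, this ▸ h1]
  -- integrability of h : dominated by exp(-(t/α))
  have hhmeas : Continuous h := by
    apply Real.continuous_exp.comp
    exact (continuous_id.div_const α).neg.sub (continuous_const.mul hPcont)
  have hexpint : IntegrableOn (fun t => Real.exp (-α⁻¹ * t)) (Ioi (0:ℝ)) :=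
    exp_neg_integrableOn_Ioi 0 (by positivity)
  have hhint : IntegrableOn h (Ioi (0:ℝ)) := by
    apply Integrable.mono' hexpint (hhmeas.aestronglyMeasurable.restrict)
    filter_upwards [ae_restrict_mem measurableSet_Ioi] with t ht
    rw [Real.norm_eq_abs, abs_of_pos (Real.exp_pos _)]
    apply Real.exp_le_exp.2
    have := hPnn t (le_of_lt ht)
    have h2 : 0 ≤ lam * P t := by positivity
    have heq2 : -α⁻¹ * t = -(t / α) := by field_simp
    rw [heq2]; linarith
  -- Step C: compute the value of ∫ g via FTC
  set F : ℝ → ℝ := fun t => -(α / ρ) * Real.exp (ρ * Real.exp (-(t / α))) with hF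
  have hFd : ∀ t : ℝ, HasDerivAt F (Real.exp (-(t / α)) * Real.exp (ρ * Real.exp (-(t / α)))) t := by
    intro t
    have d1 : HasDerivAt (fun t : ℝ => -(t / α)) (-(1 / α)) t :=
      ((hasDerivAt_id t).div_const α).neg
    have e1 := d1.exp
    have m1 := e1.const_mul ρ
    have E1 := m1.exp
    have F1 := E1.const_mul (-(α / ρ))
    convert F1 using 1
    · rfl
    · rfl
    field_simp
  have hFtend : Filter.Tendsto F Filter.atTop (nhds (-(α / ρ))) := by
    have h0 : Filter.Tendsto (fun t : ℝ => -(t / α)) Filter.atTop Filter.atBot := by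
      apply Filter.tendsto_neg_atBot_iff.2
      exact Filter.Tendsto.atTop_div_const hα Filter.tendsto_id
    have h1 : Filter.Tendsto (fun t : ℝ => Real.exp (-(t / α))) Filter.atTop (nhds 0) :=
      Real.tendsto_exp_atBot.comp h0
    have h2 : Filter.Tendsto (fun t : ℝ => ρ * Real.exp (-(t / α))) Filter.atTop (nhds 0) := by
      simpa using h1.const_mul ρ
    have h3 : Filter.Tendsto (fun t : ℝ => Real.exp (ρ * Real.exp (-(t / α)))) Filter.atTop
        (nhds 1) := by
      simpa [Function.comp_def] using (Real.continuous_exp.tendsto 0).comp h2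
    simpa [hF, neg_mul] using h3.const_mul (-(α / ρ))
  have hderiv : ∀ t ∈ Ioi (0:ℝ), HasDerivAt F
      (Real.exp (-(t / α)) * Real.exp (ρ * Real.exp (-(t / α)))) t := fun t _ => hFd t
  have hnn : ∀ t ∈ Ioi (0:ℝ),
      0 ≤ Real.exp (-(t / α)) * Real.exp (ρ * Real.exp (-(t / α))) := fun t _ => by positivity
  have hFcont : ContinuousWithinAt F (Ici (0:ℝ)) 0 :=
    ((hFd 0).continuousAt).continuousWithinAt
  have hval : (∫ t in Ioi (0:ℝ), Real.exp (-(t / α)) * Real.exp (ρ * Real.exp (-(t / α))))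
      = -(α / ρ) - F 0 :=
    MeasureTheory.integral_Ioi_of_hasDerivAt_of_nonneg hFcont hderiv hnn hFtend
  have hgint' : IntegrableOn (fun t => Real.exp (-(t / α)) * Real.exp (ρ * Real.exp (-(t / α))))
      (Ioi (0:ℝ)) :=
    MeasureTheory.integrableOn_Ioi_deriv_of_nonneg hFcont hderiv hnn hFtend
  -- rewrite g as exp(-ρ) * that
  have hgeq : ∀ t : ℝ, g t = Real.exp (-ρ) *
      (Real.exp (-(t / α)) * Real.exp (ρ * Real.exp (-(t / α)))) := by
    intro t
    rw [hg]
    simp only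
    rw [← Real.exp_add, ← Real.exp_add]
    ring_nf
  have hgfun : g = fun t => Real.exp (-ρ) *
      (Real.exp (-(t / α)) * Real.exp (ρ * Real.exp (-(t / α)))) := funext hgeq
  have hgint : IntegrableOn g (Ioi (0:ℝ)) := by
    rw [hgfun]; exact hgint'.const_mul _
  have hJ : (∫ t in Ioi (0:ℝ), g t) = α / ρ * (1 - Real.exp (-ρ)) := by
    have hrw : (∫ t in Ioi (0:ℝ), g t) = ∫ t in Ioi (0:ℝ), Real.exp (-ρ) *
        (Real.exp (-(t / α)) * Real.exp (ρ * Real.exp (-(t / α)))) := by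
      rw [hgfun]
    rw [hrw, MeasureTheory.integral_const_mul, hval]
    rw [hF]
    simp only [neg_div, Real.exp_zero, mul_one, zero_div, neg_zero]
    rw [Real.exp_neg]
    have hexpρ : Real.exp ρ ≠ 0 := Real.exp_ne_zero ρ
    field_simp
    ring
  -- Step D: J ≤ I
  have hID : (∫ t in Ioi (0:ℝ), g t) ≤ ∫ t in Ioi (0:ℝ), h t :=
    MeasureTheory.setIntegral_mono_on hgint hhint measurableSet_Ioi hgh
  set I : ℝ := ∫ t in Ioi (0:ℝ), h t with hI
  have hJval : α / ρ * (1 - Real.exp (-ρ)) ≤ I := by rw [← hJ]; exact hID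
  have hexpρlt : Real.exp (-ρ) < 1 := by
    rw [Real.exp_lt_one_iff]; linarith
  have h1me : 0 < 1 - Real.exp (-ρ) := by linarith
  have hlamI : 1 - Real.exp (-ρ) ≤ lam * I := by
    have := mul_le_mul_of_nonneg_left hJval hlam.le
    have heq : lam * (α / ρ * (1 - Real.exp (-ρ))) = 1 - Real.exp (-ρ) := by
      rw [hρ]; field_simp
    linarith [this, heq]
  have hrecip : 1 / (lam * I) ≤ 1 / (1 - Real.exp (-ρ)) :=
    one_div_le_one_div_of_le h1me hlamI
  -- final algebra
  have hkey : (Real.exp ρ - ρ - 1) / (ρ * (Real.exp ρ - 1)) =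
      1 + 1 / ρ - 1 / (1 - Real.exp (-ρ)) := by
    rw [Real.exp_neg]
    have h1 : (1:ℝ) < Real.exp ρ := by
      rw [← Real.exp_zero]; exact Real.exp_lt_exp.2 hρpos
    have h2 : Real.exp ρ - 1 ≠ 0 := by linarith
    have h3 : Real.exp ρ ≠ 0 := Real.exp_ne_zero ρ
    have h4 : 1 - (Real.exp ρ)⁻¹ ≠ 0 := by
      have : (Real.exp ρ)⁻¹ < 1 := by
        rw [inv_lt_one_iff₀]; right; exact h1
      linarith
    field_simp
    ring
  have hfinal : (Real.exp ρ - ρ - 1) / (ρ * (Real.exp ρ - 1)) ≤ 1 + 1 / ρ - 1 / (lam * I) := by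
    rw [hkey]; linarith
  exact hfinal
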